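/- Let G be a bipartite graph on {x_1,...,x_n} ∪ {y_1,...,y_n} satisfying the Herzog–Hibi conditions, and let N(y_n) = {x_{i_1},...,x_{i_s}, x_n} be the set of neighbors of y_n. Then in the graph G \ ({y_n} ∪ N(y_n)), the vertices y_{i_1},...,y_{i_s} are all isolated, and after removing these isolated vertices, the resulting graph on the remaining paired vertices again satisfies the Herzog–Hibi conditions. -/

import Mathlib

set_option linter.unusedSectionVars false
set_option linter.unusedVariables false

/-- The Herzog–Hibi conditions for a bipartite graph on `{x_1,…,x_n} ∪ {y_1,…,y_n}`
(`x_i = Sum.inl i`, `y_j = Sum.inr j`): the graph is bipartite with respect to this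
partition, `{x_i, y_i}` is an edge for all `i`, `{x_i, y_j} ∈ E` implies `i ≤ j`, and
`{x_i,y_j}, {x_j,y_l} ∈ E` with `i < j < l` implies `{x_i, y_l} ∈ E`. -/
def IsHHGraph {n : ℕ} (G : SimpleGraph (Fin n ⊕ Fin n)) : Prop :=
  (∀ i i' : Fin n, ¬ G.Adj (Sum.inl i) (Sum.inl i')) ∧
  (∀ i i' : Fin n, ¬ G.Adj (Sum.inr i) (Sum.inr i')) ∧
  (∀ i : Fin n, G.Adj (Sum.inl i) (Sum.inr i)) ∧
  (∀ i j : Fin n, G.Adj (Sum.inl i) (Sum.inr j) → i ≤ j) ∧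
  (∀ i j l : Fin n, i < j → j < l → G.Adj (Sum.inl i) (Sum.inr j) →
    G.Adj (Sum.inl j) (Sum.inr l) → G.Adj (Sum.inl i) (Sum.inr l))

/-- Delete a set of vertices from a graph (removing all incident edges), keeping the
ambient vertex type. -/
def deleteVerts {V : Type*} (G : SimpleGraph V) (D : Set V) : SimpleGraph V where
  Adj a b := G.Adj a b ∧ a ∉ D ∧ b ∉ D
  symm := ⟨fun a b h => ⟨G.symm.symm _ _ h.1, h.2.2, h.2.1⟩⟩
  loopless := ⟨fun a h => G.loopless.irrefl a h.1⟩

/-- A vertex cover of `G`. -/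
def IsVertexCover {V : Type*} (G : SimpleGraph V) (W : Set V) : Prop :=
  ∀ a b, G.Adj a b → a ∈ W ∨ b ∈ W

/-- A minimal vertex cover of `G`. -/
def IsMinVertexCover {V : Type*} (G : SimpleGraph V) (W : Set V) : Prop :=
  IsVertexCover G W ∧ ∀ W' ⊆ W, IsVertexCover G W' → W' = W

/-- The cover ideal `I(G)^∨` of a graph, generated by the squarefree monomials
corresponding to the minimal vertex covers of `G`; it is the Alexander dual of the
edge ideal. -/
noncomputable def coverIdeal {V : Type*} [Fintype V] (k : Type*) [Field k]
    (G : SimpleGraph V) : Ideal (MvPolynomial V k) :=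
  Ideal.span {p | ∃ W : Finset V, IsMinVertexCover G ↑W ∧ p = ∏ v ∈ W, MvPolynomial.X v}

/-- The edge ideal of a simple graph. -/
noncomputable def edgeIdeal {V : Type*} (k : Type*) [Field k] (G : SimpleGraph V) :
    Ideal (MvPolynomial V k) :=
  Ideal.span {p | ∃ u v, G.Adj u v ∧ p = MvPolynomial.X u * MvPolynomial.X v}

/-- let `G` satisfy the Herzog–Hibi conditions and let
`N(y_n) = {x_{i_1},…,x_{i_s}, x_n}`.  In `G \ ({y_n} ∪ N(y_n))` the vertices
`y_{i_1},…,y_{i_s}` are all isolated, and after removing these isolated vertices —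
i.e., passing to the graph obtained by deleting the vertex pairs `{x_i, y_i}` for all
`x_i ∈ N(y_n)` — the resulting graph on the remaining paired vertices again satisfies
the Herzog–Hibi conditions (with the inherited labeling). -/
theorem remove_neighborhood_of_last_y {n : ℕ}
    (G : SimpleGraph (Fin (n + 1) ⊕ Fin (n + 1))) (hG : IsHHGraph G) :
    -- the vertices `y_i` for `x_i ∈ N(y_n)` are isolated in `G \ ({y_n} ∪ N(y_n))`
    (∀ i : Fin (n + 1), G.Adj (Sum.inl i) (Sum.inr (Fin.last n)) →
      ∀ v, ¬ (deleteVerts G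
        ({Sum.inr (Fin.last n)} ∪
          {w | ∃ i' : Fin (n + 1),
            G.Adj (Sum.inl i') (Sum.inr (Fin.last n)) ∧ w = Sum.inl i'})).Adj
        (Sum.inr i) v) ∧
    -- the graph obtained by deleting the pairs `{x_i, y_i}` for `x_i ∈ N(y_n)`
    -- satisfies the Herzog–Hibi conditions on the remaining indices
    (let H := deleteVerts G
      {w | ∃ i : Fin (n + 1), G.Adj (Sum.inl i) (Sum.inr (Fin.last n)) ∧
        (w = Sum.inl i ∨ w = Sum.inr i)}
     (∀ i i' : Fin (n + 1), ¬ H.Adj (Sum.inl i) (Sum.inl i')) ∧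
     (∀ i i' : Fin (n + 1), ¬ H.Adj (Sum.inr i) (Sum.inr i')) ∧
     (∀ i : Fin (n + 1), ¬ G.Adj (Sum.inl i) (Sum.inr (Fin.last n)) →
        H.Adj (Sum.inl i) (Sum.inr i)) ∧
     (∀ i j : Fin (n + 1), H.Adj (Sum.inl i) (Sum.inr j) → i ≤ j) ∧
     (∀ i j l : Fin (n + 1), i < j → j < l → H.Adj (Sum.inl i) (Sum.inr j) →
        H.Adj (Sum.inl j) (Sum.inr l) → H.Adj (Sum.inl i) (Sum.inr l))) := by
  obtain ⟨hxx, hyy, hdiag, hle, htrans⟩ := hG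
  constructor
  · rintro i hi v ⟨hadj, hiD, hvD⟩
    -- i ≠ last n since else y_i = y_n is deleted
    have hiln : i ≠ Fin.last n := by
      rintro rfl
      exact hiD (Or.inl rfl)
    match v with
    | Sum.inr j => exact hyy i j hadj
    | Sum.inl j =>
      have hji : G.Adj (Sum.inl j) (Sum.inr i) := hadj.symm
      have hjle : j ≤ i := hle j i hji
      apply hvD
      right
      refine ⟨j, ?_, rfl⟩
      rcases eq_or_lt_of_le hjle with rfl | hlt
      · exact hi
      · exact htrans j i (Fin.last n) hlt (lt_of_le_of_ne (Fin.le_last i) hiln) hji hi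
  · intro H
    refine ⟨?_, ?_, ?_, ?_, ?_⟩
    · intro i i' h; exact hxx i i' h.1
    · intro i i' h; exact hyy i i' h.1
    · intro i hi
      refine ⟨hdiag i, ?_, ?_⟩
      · rintro ⟨j, hj, hje⟩
        rcases hje with hje | hje
        · obtain rfl : i = j := Sum.inl_injective hje
          exact hi hj
        · exact Sum.inl_ne_inr hje
      · rintro ⟨j, hj, hje⟩
        rcases hje with hje | hje
        · exact Sum.inr_ne_inl hje
        · obtain rfl : i = j := Sum.inr_injective hje
          exact hi hj
    · intro i j h; exact hle i j h.1
    · intro i j l hij hjl h1 h2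
      exact ⟨htrans i j l hij hjl h1.1 h2.1, h1.2.1, h2.2.2⟩
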